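/- Let X be a compact Hausdorff space and τ : X → X a continuous involution (τ ∘ τ = id) without fixed points. Let SP²(X) = X²/S₂ be the second symmetric product and let τ' : SP²(X) → SP²(X) be the involution induced by τ (sending the class of (x,y) to the class of (τ(x),τ(y))). Then the fixed point set {p ∈ SP²(X) : τ'(p) = p}, with the subspace topology, is homeomorphic to the orbit space X/τ (the quotient of X by the equivalence relation identifying x with τ(x)). -/

import Mathlib

noncomputable section

/-- The setoid on `Fin n → X` identifying two tuples when they differ by a
permutation of the coordinates. -/
def symmSetoid (n : ℕ) (X : Type*) : Setoid (Fin n → X) where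
  r x y := ∃ γ : Equiv.Perm (Fin n), x ∘ γ = y
  iseqv := by
    constructor
    · intro x; exact ⟨1, rfl⟩
    · rintro x y ⟨γ, rfl⟩
      exact ⟨γ⁻¹, by ext i; simp⟩
    · rintro x y z ⟨γ, rfl⟩ ⟨δ, rfl⟩
      exact ⟨γ * δ, by ext i; simp⟩

/-- The `n`-th symmetric product of a topological space: the quotient of `X^n`
by the full symmetric group, with the quotient topology. -/
def SymmProd (n : ℕ) (X : Type*) [TopologicalSpace X] : Type _ :=
  Quotient (symmSetoid n X)

instance (n : ℕ) (X : Type*) [TopologicalSpace X] : TopologicalSpace (SymmProd n X) :=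
  instTopologicalSpaceQuotient

/-- The map induced on the `n`-th symmetric product by a map. -/
def SymmProd.map (n : ℕ) {X Y : Type*} [TopologicalSpace X] [TopologicalSpace Y]
    (f : X → Y) : SymmProd n X → SymmProd n Y :=
  Quotient.map (fun x => f ∘ x) (by rintro x y ⟨γ, rfl⟩; exact ⟨γ, rfl⟩)

/-- The orbit setoid of an involution `τ` on `X`, identifying `x` with `τ x`. -/
def orbitSetoid {X : Type*} (τ : X → X) (hτ : τ ∘ τ = id) : Setoid X where
  r x y := x = y ∨ τ x = y
  iseqv := by
    constructor
    · intro x; exact Or.inl rfl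
    · rintro x y (rfl | rfl)
      · exact Or.inl rfl
      · exact Or.inr (congrFun hτ x)
    · rintro x y z (rfl | rfl) (rfl | rfl)
      · exact Or.inl rfl
      · exact Or.inr rfl
      · exact Or.inr rfl
      · exact Or.inl (congrFun hτ x).symm

set_option linter.unusedSectionVars false

namespace SP2Aux

variable {X : Type} [TopologicalSpace X]

/-- Shorthand for the quotient map onto the second symmetric product. -/
def q : (Fin 2 → X) → SymmProd 2 X := Quotient.mk (symmSetoid 2 X)

lemma fin2 (i : Fin 2) : i = 0 ∨ i = 1 :=
  match i with
  | 0 => Or.inl rfl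
  | 1 => Or.inr rfl

lemma tau2 {τ : X → X} (hτ : τ ∘ τ = id) (x : X) : τ (τ x) = x := congrFun hτ x

lemma q_cont : Continuous (q (X := X)) := continuous_quot_mk

lemma rel_cases {f g : Fin 2 → X} (h : (symmSetoid 2 X).r f g) :
    (g 0 = f 0 ∧ g 1 = f 1) ∨ (g 0 = f 1 ∧ g 1 = f 0) := by
  obtain ⟨γ, rfl⟩ := h
  rcases fin2 (γ 0) with h0 | h0 <;> rcases fin2 (γ 1) with h1 | h1
  · exact absurd (γ.injective (h0.trans h1.symm)) (by decide)
  · exact Or.inl ⟨by simp [Function.comp, h0], by simp [Function.comp, h1]⟩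
  · exact Or.inr ⟨by simp [Function.comp, h0], by simp [Function.comp, h1]⟩
  · exact absurd (γ.injective (h0.trans h1.symm)) (by decide)

lemma q_swap (a b : X) : q ![a, b] = q ![b, a] := by
  refine Quotient.sound ⟨Equiv.swap 0 1, ?_⟩
  ext i
  rcases fin2 i with rfl | rfl <;> simp

lemma pair_orbit_eq {τ : X → X} (hτ : τ ∘ τ = id) {x y : X}
    (h : q ![x, τ x] = q ![y, τ y]) :
    (Quotient.mk (orbitSetoid τ hτ) x) = Quotient.mk (orbitSetoid τ hτ) y := by
  rcases rel_cases (Quotient.exact h) with ⟨h0, _⟩ | ⟨h0, _⟩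
  · simp only [Matrix.cons_val_zero, Matrix.cons_val_one, Matrix.head_cons] at h0
    exact Quotient.sound (Or.inl h0.symm)
  · simp only [Matrix.cons_val_zero, Matrix.cons_val_one, Matrix.head_cons] at h0
    exact Quotient.sound (Or.inr h0.symm)

lemma pair_fixed {τ : X → X} (hτ : τ ∘ τ = id) (x : X) :
    SymmProd.map 2 τ (q ![x, τ x]) = q ![x, τ x] := by
  have h1 : τ ∘ ![x, τ x] = ![τ x, x] := by
    ext i
    rcases fin2 i with rfl | rfl <;> simp [tau2 hτ x]
  show Quotient.map _ _ _ = _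
  rw [q, Quotient.map_mk, h1]
  exact q_swap (τ x) x

lemma mem_fix {τ : X → X} (hτ : τ ∘ τ = id) (hfree : ∀ x, τ x ≠ x)
    {p : SymmProd 2 X} (hp : SymmProd.map 2 τ p = p) : ∃ x, p = q ![x, τ x] := by
  obtain ⟨f, rfl⟩ := Quotient.exists_rep p
  have h : (symmSetoid 2 X).r (τ ∘ f) f := Quotient.exact hp
  rcases rel_cases h with ⟨h0, _⟩ | ⟨h0, _⟩
  · exact absurd h0.symm (hfree _)
  · simp only [Function.comp_apply] at h0
    refine ⟨f 0, ?_⟩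
    have h2 : τ (f 0) = f 1 := by rw [h0, tau2 hτ]
    have hf : f = ![f 0, τ (f 0)] := by
      ext i
      rcases fin2 i with rfl | rfl <;> simp [h2]
    exact congrArg q hf

lemma q_closedMap : IsClosedMap (q (X := X)) := by
  intro C hC
  refine (isQuotientMap_quot_mk (r := (symmSetoid 2 X).r)).isClosed_preimage.mp
    (?_ : IsClosed (q ⁻¹' (q '' C)))
  have key : q ⁻¹' (q '' C) = ⋃ γ : Equiv.Perm (Fin 2), (fun g => g ∘ γ) ⁻¹' C := by
    ext g
    simp only [Set.mem_preimage, Set.mem_image, Set.mem_iUnion]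
    constructor
    · rintro ⟨f, hf, hq⟩
      obtain ⟨γ, hγ⟩ := Quotient.exact hq
      refine ⟨γ⁻¹, ?_⟩
      have : g ∘ ↑γ⁻¹ = f := by
        ext i
        have := congrFun hγ ((γ⁻¹ : Equiv.Perm (Fin 2)) i)
        simpa using this.symm
      rwa [this]
    · rintro ⟨γ, hg⟩
      exact ⟨g ∘ γ, hg, Quotient.sound ⟨γ⁻¹, by ext i; simp⟩⟩
  exact key ▸ isClosed_iUnion_of_finite fun γ =>
    hC.preimage (continuous_pi fun i => continuous_apply (γ i))

end SP2Aux

open SP2Aux in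
theorem fixedPoints_SP2_homeomorph_orbitSpace
    (X : Type) [TopologicalSpace X] [CompactSpace X] [T2Space X]
    (τ : X → X) (hcont : Continuous τ) (hτ : τ ∘ τ = id) (hfree : ∀ x, τ x ≠ x) :
    Nonempty ({p : SymmProd 2 X // SymmProd.map 2 τ p = p} ≃ₜ
      Quotient (orbitSetoid τ hτ)) := by
  set Fix := {p : SymmProd 2 X // SymmProd.map 2 τ p = p}
  -- the forward map
  let g : Fix → Quotient (orbitSetoid τ hτ) := fun pt =>
    Quotient.mk (orbitSetoid τ hτ) (mem_fix hτ hfree pt.2).choose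
  have g_spec : ∀ pt : Fix, pt.1 = q ![(mem_fix hτ hfree pt.2).choose,
      τ (mem_fix hτ hfree pt.2).choose] := fun pt => (mem_fix hτ hfree pt.2).choose_spec
  have g_eq : ∀ (pt : Fix) (x : X), pt.1 = q ![x, τ x] →
      g pt = Quotient.mk (orbitSetoid τ hτ) x := by
    intro pt x hx
    exact pair_orbit_eq hτ ((g_spec pt).symm.trans hx)
  -- the inverse map
  have hwd : ∀ a b : X, (orbitSetoid τ hτ).r a b →
      (⟨q ![a, τ a], pair_fixed hτ a⟩ : Fix) = ⟨q ![b, τ b], pair_fixed hτ b⟩ := by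
    rintro a b (rfl | rfl)
    · rfl
    · refine Subtype.ext ?_
      show q ![a, τ a] = q ![τ a, τ (τ a)]
      rw [tau2 hτ a]
      exact q_swap a (τ a)
  let h : Quotient (orbitSetoid τ hτ) → Fix :=
    Quotient.lift (fun x => (⟨q ![x, τ x], pair_fixed hτ x⟩ : Fix)) hwd
  have pair_cont : Continuous fun x : X => ![x, τ x] := by
    refine continuous_pi fun i => ?_
    rcases fin2 i with rfl | rfl
    · simpa using continuous_id'
    · simpa using hcont
  have h_cont : Continuous h :=
    Continuous.quotient_lift (((q_cont).comp pair_cont).subtype_mk _) hwd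
  have g_cont : Continuous g := by
    rw [continuous_iff_isClosed]
    intro S hS
    have key : g ⁻¹' S = Subtype.val ⁻¹' (q '' {f : Fin 2 → X | f 1 = τ (f 0) ∧
        Quotient.mk (orbitSetoid τ hτ) (f 0) ∈ S}) := by
      ext pt
      obtain ⟨x, hx⟩ := mem_fix hτ hfree pt.2
      simp only [Set.mem_preimage, Set.mem_image, Set.mem_setOf_eq]
      constructor
      · intro hgt
        refine ⟨![x, τ x], ⟨by simp, ?_⟩, hx.symm⟩
        have := g_eq pt x hx
        simp only [Matrix.cons_val_zero]
        rwa [← this]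
      · rintro ⟨f, ⟨hf1, hfS⟩, hfq⟩
        have hf : f = ![f 0, τ (f 0)] := by
          ext i
          rcases fin2 i with rfl | rfl <;> simp [hf1]
        have hpt : (pt.1 : SymmProd 2 X) = q ![f 0, τ (f 0)] :=
          hfq.symm.trans (congrArg q hf)
        rw [g_eq pt (f 0) hpt]
        exact hfS
    rw [key]
    have hT : IsClosed {f : Fin 2 → X | f 1 = τ (f 0) ∧
        Quotient.mk (orbitSetoid τ hτ) (f 0) ∈ S} := by
      rw [Set.setOf_and]
      exact (isClosed_eq (continuous_apply 1) (hcont.comp (continuous_apply 0))).inter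
        (hS.preimage ((continuous_quot_mk).comp (continuous_apply 0)))
    exact (q_closedMap _ hT).preimage continuous_subtype_val
  refine ⟨⟨⟨g, h, ?_, ?_⟩, g_cont, h_cont⟩⟩
  · intro pt
    refine Subtype.ext ?_
    show (h (g pt)).1 = pt.1
    have : h (g pt) = ⟨q ![(mem_fix hτ hfree pt.2).choose, τ (mem_fix hτ hfree pt.2).choose],
        pair_fixed hτ _⟩ := rfl
    rw [this]
    exact (g_spec pt).symm
  · intro a
    obtain ⟨x, rfl⟩ := Quotient.exists_rep a
    exact g_eq _ x rfl

end
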